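/- The inner product bifunctional ⟨·,·⟩ : H_c × H̄_r → ℂ on an infinite-dimensional Hilbert space H is not strongly completely bounded, although it is weakly completely bounded. -/

import Mathlib

open ContinuousLinearMap in
private lemma exists_orthonormal_family' {E : Type*} [NormedAddCommGroup E]
    [InnerProductSpace ℂ E] [CompleteSpace E] (hE : ¬ FiniteDimensional ℂ E) (n : ℕ) :
    ∃ e : Fin n → E, Orthonormal ℂ e := by
  induction n with
  | zero => exact ⟨fun i => 0, orthonormal_iff_ite.mpr (fun i => i.elim0)⟩
  | succ n ih =>
    obtain ⟨e, he⟩ := ih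
    set K := Submodule.span ℂ (Set.range e) with hKdef
    haveI : FiniteDimensional ℂ K := FiniteDimensional.span_of_finite ℂ (Set.finite_range e)
    have hKne : Kᗮ ≠ ⊥ := by
      rw [Ne, Submodule.orthogonal_eq_bot_iff]
      intro h
      haveI : FiniteDimensional ℂ (⊤ : Submodule ℂ E) := h ▸ ‹FiniteDimensional ℂ K›
      exact hE (Module.Finite.equiv (Submodule.topEquiv))
    obtain ⟨v, hvK, hv0⟩ := Submodule.exists_mem_ne_zero_of_ne_bot hKne
    set u : E := (‖v‖ : ℂ)⁻¹ • v with hu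
    have hvnorm : ‖v‖ ≠ 0 := norm_ne_zero_iff.mpr hv0
    have hunorm : ‖u‖ = 1 := by
      rw [hu, norm_smul]
      simp [hvnorm]
    have huK : u ∈ Kᗮ := Submodule.smul_mem _ _ hvK
    have hmem : ∀ i, e i ∈ K := fun i => Submodule.subset_span (Set.mem_range_self i)
    refine ⟨Fin.cons u e, orthonormal_iff_ite.mpr ?_⟩
    intro i j
    refine Fin.cases ?_ ?_ i <;> [skip; intro i'] <;> refine Fin.cases ?_ ?_ j
    · simp [inner_self_eq_norm_sq_to_K (𝕜 := ℂ), hunorm]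
    · intro j'
      have : inner ℂ (e j') u = (0 : ℂ) := (Submodule.mem_orthogonal K u).mp huK _ (hmem j')
      have h0 : inner ℂ u (e j') = (0 : ℂ) := by
        rw [← inner_conj_symm, this, map_zero]
      simp [h0, (Fin.succ_ne_zero j').symm]
    · have : inner ℂ (e i') u = (0 : ℂ) := (Submodule.mem_orthogonal K u).mp huK _ (hmem i')
      simp [this, Fin.succ_ne_zero i']
    · intro j'
      have := orthonormal_iff_ite.mp he i' j'
      simpa [Fin.succ_inj] using this

private lemma parseval_span' {L : Type*} [NormedAddCommGroup L] [InnerProductSpace ℂ L]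
    {W : Submodule ℂ L} [FiniteDimensional ℂ W] (w : W) :
    ‖(w : L)‖ ^ 2 = ∑ k, ‖(inner ℂ ((stdOrthonormalBasis ℂ W k : L)) ((w : L)) : ℂ)‖ ^ 2 := by
  set b := stdOrthonormalBasis ℂ W
  have h1 : ‖(w : L)‖ = ‖w‖ := rfl
  have h2 : ‖w‖ = ‖b.repr w‖ := (b.repr.norm_map w).symm
  have h3 : ‖b.repr w‖ ^ 2 = ∑ k, ‖b.repr w k‖ ^ 2 := by
    rw [EuclideanSpace.norm_eq]
    rw [Real.sq_sqrt (by positivity)]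
  rw [h1, h2, h3]
  refine Finset.sum_congr rfl fun k _ => ?_
  rw [b.repr_apply_apply, Submodule.coe_inner]

private lemma key_bessel' {H L : Type*} [NormedAddCommGroup H] [InnerProductSpace ℂ H]
    [NormedAddCommGroup L] [InnerProductSpace ℂ L]
    {n m : ℕ} {x : Fin n → H} {y : Fin m → H}
    (hx : Orthonormal ℂ x) (hy : Orthonormal ℂ y) (p : Fin n → L) :
    ∑ j, ‖∑ i, (inner ℂ (y j) (x i) : ℂ) • p i‖ ^ 2 ≤ ∑ i, ‖p i‖ ^ 2 := by
  classical
  set W := Submodule.span ℂ (Set.range p) with hW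
  haveI : FiniteDimensional ℂ W := FiniteDimensional.span_of_finite ℂ (Set.finite_range p)
  set b := stdOrthonormalBasis ℂ W with hb
  set f : Fin (Module.finrank ℂ W) → L := fun k => (b k : L) with hf
  have hpW : ∀ i, p i ∈ W := fun i => Submodule.subset_span (Set.mem_range_self i)
  set g : Fin (Module.finrank ℂ W) → H :=
    fun k => ∑ i, (inner ℂ (f k) (p i) : ℂ) • x i with hg
  have step1 : ∀ j, ‖∑ i, (inner ℂ (y j) (x i) : ℂ) • p i‖ ^ 2
      = ∑ k, ‖(inner ℂ (y j) (g k) : ℂ)‖ ^ 2 := by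
    intro j
    have hmem : (∑ i, (inner ℂ (y j) (x i) : ℂ) • p i) ∈ W :=
      Submodule.sum_mem _ fun i _ => Submodule.smul_mem _ _ (hpW i)
    have := parseval_span' (L := L) (⟨_, hmem⟩ : W)
    simp only [Submodule.coe_mk] at this
    rw [this]
    refine Finset.sum_congr rfl fun k _ => ?_
    congr 1
    simp only [hg, inner_sum, inner_smul_right]
    congr 1
    exact Finset.sum_congr rfl fun i _ => by ring
  calc ∑ j, ‖∑ i, (inner ℂ (y j) (x i) : ℂ) • p i‖ ^ 2
      = ∑ j, ∑ k, ‖(inner ℂ (y j) (g k) : ℂ)‖ ^ 2 := Finset.sum_congr rfl fun j _ => step1 j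
    _ = ∑ k, ∑ j, ‖(inner ℂ (y j) (g k) : ℂ)‖ ^ 2 := Finset.sum_comm
    _ ≤ ∑ k, ‖g k‖ ^ 2 := Finset.sum_le_sum fun k _ => hy.sum_inner_products_le (g k)
    _ = ∑ k, ∑ i, ‖(inner ℂ (f k) (p i) : ℂ)‖ ^ 2 := by
        refine Finset.sum_congr rfl fun k _ => ?_
        have h := hx.inner_sum (fun i => (inner ℂ (f k) (p i) : ℂ))
          (fun i => (inner ℂ (f k) (p i) : ℂ)) Finset.univ
        have h2 : (inner ℂ (g k) (g k) : ℂ) = ∑ i, (‖(inner ℂ (f k) (p i) : ℂ)‖ : ℂ) ^ 2 := by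
          rw [hg]
          rw [h]
          refine Finset.sum_congr rfl fun i _ => ?_
          rw [RCLike.conj_mul]
          norm_cast
        rw [inner_self_eq_norm_sq_to_K (𝕜 := ℂ)] at h2
        have h3 : ((‖g k‖ ^ 2 : ℝ) : ℂ) = ((∑ i, ‖(inner ℂ (f k) (p i) : ℂ)‖ ^ 2 : ℝ) : ℂ) := by
          push_cast
          exact h2
        exact_mod_cast h3
    _ = ∑ i, ∑ k, ‖(inner ℂ (f k) (p i) : ℂ)‖ ^ 2 := Finset.sum_comm
    _ = ∑ i, ‖p i‖ ^ 2 := by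
        refine Finset.sum_congr rfl fun i _ => ?_
        exact (parseval_span' (⟨p i, hpW i⟩ : W)).symm

section RankOne

open ContinuousLinearMap

variable {L : Type*} [NormedAddCommGroup L] [InnerProductSpace ℂ L] [CompleteSpace L]

private noncomputable def rk (g v : L) : L →L[ℂ] L := (innerSL ℂ g).smulRight v

omit [CompleteSpace L] in
private lemma rk_apply (g v ξ : L) : rk g v ξ = (inner ℂ g ξ : ℂ) • v := rfl

omit [CompleteSpace L] in
private lemma rk_comp (g v g' v' : L) :
    rk g v ∘L rk g' v' = (inner ℂ g v' : ℂ) • rk g' v := by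
  ext ξ
  simp only [coe_comp', Function.comp_apply, rk_apply, smul_apply, inner_smul_right]
  rw [mul_comm, mul_smul]

private lemma rk_adjoint (g v : L) : adjoint (rk g v) = rk v g := by
  symm
  rw [eq_adjoint_iff]
  intro ξ w
  simp only [rk_apply, inner_smul_left, inner_smul_right]
  rw [inner_conj_symm, mul_comm]

omit [CompleteSpace L] in
private lemma rk_norm (g v : L) : ‖rk g v‖ = ‖g‖ * ‖v‖ := by
  rw [rk, norm_smulRight_apply, innerSL_apply_norm]

omit [CompleteSpace L] in
private lemma rk_compact (g v : L) : IsCompactOperator (rk g v) := by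
  have hf : IsCompactOperator (fun c : ℂ => c • v) := by
    refine ⟨(fun c : ℂ => c • v) '' Metric.closedBall 0 1, ?_, ?_⟩
    · exact (isCompact_closedBall 0 1).image (by fun_prop)
    · exact Filter.mem_of_superset (Metric.closedBall_mem_nhds 0 one_pos)
        (Set.subset_preimage_image _ _)
  have heq : ⇑(rk g v) = (fun c : ℂ => c • v) ∘ ⇑(innerSL ℂ g) := rfl
  rw [show (⇑(rk g v) : L → L) = (fun c : ℂ => c • v) ∘ ⇑(innerSL ℂ g) from rfl]
  exact hf.comp_clm (innerSL ℂ g)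

end RankOne

set_option maxHeartbeats 2000000 in
open ContinuousLinearMap in
/-- The inner-product bifunctional `⟨·,·⟩ : H_c × H̄_r → ℂ` (`H` infinite-dimensional)
is weakly completely bounded (with `‖⟨·,·⟩‖_wcb = 1`) but not strongly completely
bounded.  Elements of `KH_c` and `KH̄_r` are written `u = Σᵢ aᵢ ⊗ xᵢ`,
`v = Σⱼ bⱼ ⊗ yⱼ` with compact coefficients and orthonormal vectors; the quantum
norms are `‖u‖_c = ‖Σᵢ aᵢ* aᵢ‖^{1/2}` and `‖v‖_r = ‖Σⱼ bⱼ bⱼ*‖^{1/2}`.  The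
operation `a ⋄ b = ι*(a ⊗̇ b)ι` on `B(L)` (`ι : L → L ⊗̇ L` a fixed unitary) is
axiomatized by the identities (3) of the paper: biadditivity, homogeneity,
multiplicativity, compatibility with adjoints, `‖a ⋄ b‖ = ‖a‖ ‖b‖`, and the
existence of the flip unitary `Δ` with `Δ (a ⋄ b) Δ* = b ⋄ a`.  The strong
amplification sends `(u, v)` to `Σᵢⱼ ⟨xᵢ, yⱼ⟩ aᵢ bⱼ`, the weak amplification to
`Σᵢⱼ ⟨xᵢ, yⱼ⟩ aᵢ ⋄ bⱼ`, and `⟨x, y⟩` denotes the inner product of `H`, linear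
in `x` and conjugate-linear in `y` (Mathlib's `⟪y, x⟫`). -/
theorem inner_product_wcb_not_scb
    {L : Type*} [NormedAddCommGroup L] [InnerProductSpace ℂ L] [CompleteSpace L]
    {H : Type*} [NormedAddCommGroup H] [InnerProductSpace ℂ H] [CompleteSpace H]
    (hL : ¬ FiniteDimensional ℂ L) (hH : ¬ FiniteDimensional ℂ H)
    -- the operation `⋄` and its properties
    (d : (L →L[ℂ] L) → (L →L[ℂ] L) → (L →L[ℂ] L))
    (hd_addl : ∀ a a' b, d (a + a') b = d a b + d a' b)
    (hd_addr : ∀ a b b', d a (b + b') = d a b + d a b')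
    (hd_smull : ∀ (c : ℂ) a b, d (c • a) b = c • d a b)
    (hd_smulr : ∀ (c : ℂ) a b, d a (c • b) = c • d a b)
    (hd_mul : ∀ a b a' b', d a b ∘L d a' b' = d (a ∘L a') (b ∘L b'))
    (hd_star : ∀ a b, adjoint (d a b) = d (adjoint a) (adjoint b))
    (hd_norm : ∀ a b, ‖d a b‖ = ‖a‖ * ‖b‖)
    (Δ : L →L[ℂ] L) (hΔ₁ : adjoint Δ ∘L Δ = 1) (hΔ₂ : Δ ∘L adjoint Δ = 1)
    (hflip : ∀ a b, Δ ∘L d a b ∘L adjoint Δ = d b a) :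
    -- the inner product bifunctional is weakly completely contractive …
    (∀ (n m : ℕ) (a : Fin n → (L →L[ℂ] L)) (b : Fin m → (L →L[ℂ] L))
      (x : Fin n → H) (y : Fin m → H),
      (∀ i, IsCompactOperator (a i)) → (∀ j, IsCompactOperator (b j)) →
      Orthonormal ℂ x → Orthonormal ℂ y →
      ‖∑ i, ∑ j, (inner ℂ (y j) (x i) : ℂ) • d (a i) (b j)‖ ≤
        Real.sqrt ‖∑ i, adjoint (a i) ∘L a i‖ *
          Real.sqrt ‖∑ j, b j ∘L adjoint (b j)‖) ∧
    -- … but it is not strongly completely bounded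
    ¬ ∃ C : ℝ, ∀ (n m : ℕ) (a : Fin n → (L →L[ℂ] L)) (b : Fin m → (L →L[ℂ] L))
      (x : Fin n → H) (y : Fin m → H),
      (∀ i, IsCompactOperator (a i)) → (∀ j, IsCompactOperator (b j)) →
      Orthonormal ℂ x → Orthonormal ℂ y →
      ‖∑ i, ∑ j, (inner ℂ (y j) (x i) : ℂ) • (a i ∘L b j)‖ ≤
        C * Real.sqrt ‖∑ i, adjoint (a i) ∘L a i‖ *
          Real.sqrt ‖∑ j, b j ∘L adjoint (b j)‖ := by
  have hNontriv : Nontrivial L := by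
    by_contra h
    rw [not_nontrivial_iff_subsingleton] at h
    exact hL (Module.Finite.of_basis (Module.Basis.empty L (ι := Fin 0)))
  have norm_one_clm : ‖(1 : L →L[ℂ] L)‖ = 1 := by
    rw [ContinuousLinearMap.one_def]; exact norm_id
  have hadj1 : adjoint (1 : L →L[ℂ] L) = 1 := by
    rw [ContinuousLinearMap.one_def, ContinuousLinearMap.adjoint_id]
  have hcomp11 : (1 : L →L[ℂ] L) ∘L (1 : L →L[ℂ] L) = 1 := by
    rw [ContinuousLinearMap.one_def, ContinuousLinearMap.id_comp]
  constructor
  · intro n m a b x y _ _ hx hy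
    set A : L →L[ℂ] L := ∑ i, adjoint (a i) ∘L a i with hA
    set B : L →L[ℂ] L := ∑ j, b j ∘L adjoint (b j) with hB
    set T : L →L[ℂ] L := ∑ i, ∑ j, (inner ℂ (y j) (x i) : ℂ) • d (a i) (b j) with hT
    have hsplit : ∀ i j, d (a i) (b j) = d 1 (b j) ∘L d (a i) 1 := by
      intro i j
      rw [hd_mul, ContinuousLinearMap.one_def, ContinuousLinearMap.id_comp,
        ContinuousLinearMap.comp_id]
    have key : ∀ ξ : L, ‖T ξ‖ ≤ (Real.sqrt ‖A‖ * Real.sqrt ‖B‖) * ‖ξ‖ := by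
      intro ξ
      set η : L := T ξ with hη
      set p : Fin n → L := fun i => d (a i) 1 ξ with hp
      set r : Fin m → L := fun j => d 1 (adjoint (b j)) η with hr
      set s : Fin m → L := fun j => ∑ i, (inner ℂ (y j) (x i) : ℂ) • p i with hs
      -- the adjoint of d 1 (b j)
      have hradj : ∀ j, r j = adjoint (d 1 (b j)) η := by
        intro j
        rw [hr, hd_star, hadj1]
      -- ⟪η, T ξ⟫ = ∑ j ⟪r j, s j⟫
      have hinner : (inner ℂ η (T ξ) : ℂ) = ∑ j, (inner ℂ (r j) (s j) : ℂ) := by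
        have hTξ : T ξ = ∑ i, ∑ j, (inner ℂ (y j) (x i) : ℂ) • d 1 (b j) (p i) := by
          rw [hT]
          simp only [ContinuousLinearMap.sum_apply, ContinuousLinearMap.smul_apply]
          refine Finset.sum_congr rfl fun i _ => Finset.sum_congr rfl fun j _ => ?_
          rw [hsplit i j]
          rfl
        rw [hTξ, inner_sum]
        simp only [inner_sum, inner_smul_right]
        rw [Finset.sum_comm]
        refine Finset.sum_congr rfl fun j _ => ?_
        have hterm : ∀ i, (inner ℂ (y j) (x i) : ℂ) * inner ℂ η (d 1 (b j) (p i))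
            = (inner ℂ (r j) ((inner ℂ (y j) (x i) : ℂ) • p i) : ℂ) := by
          intro i
          rw [inner_smul_right]
          congr 1
          rw [hradj j, ContinuousLinearMap.adjoint_inner_left]
        rw [Finset.sum_congr rfl fun i _ => hterm i, hs, ← inner_sum]
      -- ∑ ‖p i‖² ≤ ‖A‖ ‖ξ‖²
      have hp_bound : ∑ i, ‖p i‖ ^ 2 ≤ ‖A‖ * ‖ξ‖ ^ 2 := by
        have hterm : ∀ i : Fin n, (inner ℂ (p i) (p i) : ℂ)
            = inner ℂ ξ (d (adjoint (a i) ∘L a i) 1 ξ) := by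
          intro i
          have h1 : d (a i) 1 = adjoint (d (adjoint (a i)) 1) := by
            rw [hd_star, adjoint_adjoint, hadj1]
          calc (inner ℂ (p i) (p i) : ℂ)
              = inner ℂ ((adjoint (d (adjoint (a i)) 1)) ξ) (p i) := by rw [← h1]
            _ = inner ℂ ξ (d (adjoint (a i)) 1 (p i)) :=
                ContinuousLinearMap.adjoint_inner_left _ _ _
            _ = inner ℂ ξ ((d (adjoint (a i)) 1 ∘L d (a i) 1) ξ) := rfl
            _ = inner ℂ ξ (d (adjoint (a i) ∘L a i) 1 ξ) := by
                rw [hd_mul, ContinuousLinearMap.one_def, ContinuousLinearMap.id_comp]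
        have hsum : (∑ i, (inner ℂ (p i) (p i) : ℂ)) = inner ℂ ξ (d A 1 ξ) := by
          have hdsum : d A 1 = ∑ i, d (adjoint (a i) ∘L a i) 1 :=
            map_sum (AddMonoidHom.mk' (fun z => d z 1) (fun u v => hd_addl u v 1)) _ _
          rw [Finset.sum_congr rfl fun i _ => hterm i, ← inner_sum, hdsum]
          congr 1
          rw [ContinuousLinearMap.sum_apply]
        have hreal : (∑ i, ‖p i‖ ^ 2 : ℝ) = ‖(inner ℂ ξ (d A 1 ξ) : ℂ)‖ := by
          rw [← hsum]
          have : (∑ i, (inner ℂ (p i) (p i) : ℂ)) = ((∑ i, ‖p i‖ ^ 2 : ℝ) : ℂ) := by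
            push_cast
            refine Finset.sum_congr rfl fun i _ => ?_
            rw [inner_self_eq_norm_sq_to_K (𝕜 := ℂ)]
            norm_cast
          rw [this, Complex.norm_real, Real.norm_of_nonneg (by positivity)]
        rw [hreal]
        calc ‖(inner ℂ ξ (d A 1 ξ) : ℂ)‖ ≤ ‖ξ‖ * ‖d A 1 ξ‖ := norm_inner_le_norm _ _
          _ ≤ ‖ξ‖ * (‖d A 1‖ * ‖ξ‖) :=
              mul_le_mul_of_nonneg_left (ContinuousLinearMap.le_opNorm _ _) (norm_nonneg _)
          _ = ‖A‖ * ‖ξ‖ ^ 2 := by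
              rw [hd_norm, norm_one_clm]
              ring
      -- ∑ ‖r j‖² ≤ ‖B‖ ‖η‖²
      have hr_bound : ∑ j, ‖r j‖ ^ 2 ≤ ‖B‖ * ‖η‖ ^ 2 := by
        have hterm : ∀ j : Fin m, (inner ℂ (r j) (r j) : ℂ)
            = inner ℂ η (d 1 (b j ∘L adjoint (b j)) η) := by
          intro j
          calc (inner ℂ (r j) (r j) : ℂ)
              = inner ℂ ((adjoint (d 1 (b j))) η) (r j) := by rw [← hradj j]
            _ = inner ℂ η (d 1 (b j) (r j)) := ContinuousLinearMap.adjoint_inner_left _ _ _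
            _ = inner ℂ η ((d 1 (b j) ∘L d 1 (adjoint (b j))) η) := rfl
            _ = inner ℂ η (d 1 (b j ∘L adjoint (b j)) η) := by
                rw [hd_mul, ContinuousLinearMap.one_def, ContinuousLinearMap.id_comp]
        have hsum : (∑ j, (inner ℂ (r j) (r j) : ℂ)) = inner ℂ η (d 1 B η) := by
          have hdsum : d 1 B = ∑ j, d 1 (b j ∘L adjoint (b j)) :=
            map_sum (AddMonoidHom.mk' (fun z => d 1 z) (fun u v => hd_addr 1 u v)) _ _
          rw [Finset.sum_congr rfl fun j _ => hterm j, ← inner_sum, hdsum]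
          congr 1
          rw [ContinuousLinearMap.sum_apply]
        have hreal : (∑ j, ‖r j‖ ^ 2 : ℝ) = ‖(inner ℂ η (d 1 B η) : ℂ)‖ := by
          rw [← hsum]
          have : (∑ j, (inner ℂ (r j) (r j) : ℂ)) = ((∑ j, ‖r j‖ ^ 2 : ℝ) : ℂ) := by
            push_cast
            refine Finset.sum_congr rfl fun j _ => ?_
            rw [inner_self_eq_norm_sq_to_K (𝕜 := ℂ)]
            norm_cast
          rw [this, Complex.norm_real, Real.norm_of_nonneg (by positivity)]
        rw [hreal]
        calc ‖(inner ℂ η (d 1 B η) : ℂ)‖ ≤ ‖η‖ * ‖d 1 B η‖ := norm_inner_le_norm _ _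
          _ ≤ ‖η‖ * (‖d 1 B‖ * ‖η‖) :=
              mul_le_mul_of_nonneg_left (ContinuousLinearMap.le_opNorm _ _) (norm_nonneg _)
          _ = ‖B‖ * ‖η‖ ^ 2 := by
              rw [hd_norm, norm_one_clm]
              ring
      -- ∑ ‖s j‖² ≤ ∑ ‖p i‖²
      have hs_bound : ∑ j, ‖s j‖ ^ 2 ≤ ∑ i, ‖p i‖ ^ 2 := key_bessel' hx hy p
      -- Cauchy–Schwarz chain
      have hsq : ‖T ξ‖ ^ 2 ≤ (Real.sqrt ‖A‖ * Real.sqrt ‖B‖) * ‖ξ‖ * ‖T ξ‖ := by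
        have h0 : ‖T ξ‖ ^ 2 = ‖(inner ℂ η (T ξ) : ℂ)‖ := by
          rw [hη, inner_self_eq_norm_sq_to_K (𝕜 := ℂ)]
          rw [norm_pow, RCLike.norm_ofReal, abs_of_nonneg (norm_nonneg _)]
        have h1 : ‖(inner ℂ η (T ξ) : ℂ)‖ ≤ ∑ j, ‖r j‖ * ‖s j‖ := by
          rw [hinner]
          refine le_trans (norm_sum_le _ _) (Finset.sum_le_sum fun j _ => ?_)
          exact norm_inner_le_norm _ _
        have h2 : ∑ j, ‖r j‖ * ‖s j‖
            ≤ Real.sqrt (∑ j, ‖r j‖ ^ 2) * Real.sqrt (∑ j, ‖s j‖ ^ 2) := by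
          have hcs := Finset.sum_mul_sq_le_sq_mul_sq Finset.univ
            (fun j => ‖r j‖) (fun j => ‖s j‖)
          have hnn : (0 : ℝ) ≤ ∑ j, ‖r j‖ * ‖s j‖ :=
            Finset.sum_nonneg fun j _ => mul_nonneg (norm_nonneg _) (norm_nonneg _)
          calc ∑ j, ‖r j‖ * ‖s j‖ = Real.sqrt ((∑ j, ‖r j‖ * ‖s j‖) ^ 2) :=
                (Real.sqrt_sq hnn).symm
            _ ≤ Real.sqrt ((∑ j, ‖r j‖ ^ 2) * ∑ j, ‖s j‖ ^ 2) := Real.sqrt_le_sqrt hcs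
            _ = Real.sqrt (∑ j, ‖r j‖ ^ 2) * Real.sqrt (∑ j, ‖s j‖ ^ 2) :=
                Real.sqrt_mul (Finset.sum_nonneg fun j _ => sq_nonneg _) _
        have h3 : Real.sqrt (∑ j, ‖r j‖ ^ 2) ≤ Real.sqrt ‖B‖ * ‖η‖ := by
          rw [show Real.sqrt ‖B‖ * ‖η‖ = Real.sqrt (‖B‖ * ‖η‖ ^ 2) by
            rw [Real.sqrt_mul (norm_nonneg _), Real.sqrt_sq (norm_nonneg _)]]
          exact Real.sqrt_le_sqrt hr_bound
        have h4 : Real.sqrt (∑ j, ‖s j‖ ^ 2) ≤ Real.sqrt ‖A‖ * ‖ξ‖ := by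
          rw [show Real.sqrt ‖A‖ * ‖ξ‖ = Real.sqrt (‖A‖ * ‖ξ‖ ^ 2) by
            rw [Real.sqrt_mul (norm_nonneg _), Real.sqrt_sq (norm_nonneg _)]]
          exact Real.sqrt_le_sqrt (le_trans hs_bound hp_bound)
        calc ‖T ξ‖ ^ 2 ≤ Real.sqrt (∑ j, ‖r j‖ ^ 2) * Real.sqrt (∑ j, ‖s j‖ ^ 2) := by
              rw [h0]; exact le_trans h1 h2
          _ ≤ (Real.sqrt ‖B‖ * ‖η‖) * (Real.sqrt ‖A‖ * ‖ξ‖) := by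
              exact mul_le_mul h3 h4 (Real.sqrt_nonneg _)
                (mul_nonneg (Real.sqrt_nonneg _) (norm_nonneg _))
          _ = (Real.sqrt ‖A‖ * Real.sqrt ‖B‖) * ‖ξ‖ * ‖T ξ‖ := by
              rw [hη]; ring
      have habs : ∀ t c : ℝ, 0 ≤ t → 0 ≤ c → t ^ 2 ≤ c * t → t ≤ c := by
        intro t c ht hc h
        rcases ht.eq_or_lt with h0 | h0
        · rw [← h0]; exact hc
        · nlinarith
      exact habs ‖T ξ‖ ((Real.sqrt ‖A‖ * Real.sqrt ‖B‖) * ‖ξ‖) (norm_nonneg _)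
        (by positivity) hsq
    exact ContinuousLinearMap.opNorm_le_bound T
      (mul_nonneg (Real.sqrt_nonneg _) (Real.sqrt_nonneg _)) key
  · rintro ⟨C, hC⟩
    set n : ℕ := ⌊|C|⌋₊ + 1 with hn
    obtain ⟨e, he⟩ := exists_orthonormal_family' hH n
    obtain ⟨f, hf⟩ := exists_orthonormal_family' hL (n + 1)
    have hf' : Orthonormal ℂ (fun i : Fin n => f i.succ) :=
      hf.comp _ (Fin.succ_injective n)
    set P : L →L[ℂ] L := rk (f 0) (f 0) with hP
    set a : Fin n → (L →L[ℂ] L) := fun i => rk (f i.succ) (f 0) with ha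
    set b : Fin n → (L →L[ℂ] L) := fun j => rk (f 0) (f j.succ) with hb
    have hf0 : (inner ℂ (f 0) (f 0) : ℂ) = 1 := by
      rw [inner_self_eq_norm_sq_to_K (𝕜 := ℂ), hf.1]
      norm_num
    set Q : L →L[ℂ] L := ∑ i : Fin n, rk (f i.succ) (f i.succ) with hQ
    have hQa : ∑ i, adjoint (a i) ∘L a i = Q := by
      refine Finset.sum_congr rfl fun i _ => ?_
      rw [ha]
      simp only
      rw [rk_adjoint, rk_comp, hf0, one_smul]
    have hQb : ∑ j, b j ∘L adjoint (b j) = Q := by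
      refine Finset.sum_congr rfl fun j _ => ?_
      rw [hb]
      simp only
      rw [rk_adjoint, rk_comp, hf0, one_smul]
    have hQnormSq : ∀ ξ : L, ‖Q ξ‖ ^ 2 ≤ ‖ξ‖ ^ 2 := by
      intro ξ
      have h1 : Q ξ = ∑ i : Fin n, (inner ℂ (f i.succ) ξ : ℂ) • f i.succ := by
        rw [hQ, ContinuousLinearMap.sum_apply]
        exact Finset.sum_congr rfl fun i _ => rfl
      have hps : (inner ℂ (Q ξ) (Q ξ) : ℂ)
          = ∑ i : Fin n, (starRingEnd ℂ) (inner ℂ (f i.succ) ξ : ℂ) * inner ℂ (f i.succ) ξ := by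
        rw [h1]
        exact hf'.inner_sum _ _ _
      have h3 : ‖Q ξ‖ ^ 2 = ∑ i : Fin n, ‖(inner ℂ (f i.succ) ξ : ℂ)‖ ^ 2 := by
        have h2 := hps
        rw [inner_self_eq_norm_sq_to_K (𝕜 := ℂ)] at h2
        have h4 : ∀ i : Fin n, (starRingEnd ℂ) (inner ℂ (f i.succ) ξ : ℂ) * inner ℂ (f i.succ) ξ
            = ((‖(inner ℂ (f i.succ) ξ : ℂ)‖ ^ 2 : ℝ) : ℂ) := by
          intro i
          rw [RCLike.conj_mul]
          norm_cast
        rw [Finset.sum_congr rfl (fun i _ => h4 i)] at h2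
        push_cast at h2
        exact RCLike.ofReal_injective (K := ℂ) (by push_cast; exact h2)
      rw [h3]
      exact hf'.sum_inner_products_le ξ
    have hQnorm : ‖Q‖ ≤ 1 := by
      refine ContinuousLinearMap.opNorm_le_bound _ zero_le_one fun ξ => ?_
      rw [one_mul]
      nlinarith [hQnormSq ξ, norm_nonneg (Q ξ), norm_nonneg ξ]
    have hsum : ∑ i, ∑ j, (inner ℂ (e j) (e i) : ℂ) • (a i ∘L b j) = (n : ℂ) • P := by
      have hrow : ∀ i : Fin n, ∑ j, (inner ℂ (e j) (e i) : ℂ) • (a i ∘L b j) = P := by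
        intro i
        rw [Finset.sum_eq_single i]
        · rw [ha, hb]
          simp only
          rw [rk_comp]
          have h1 : (inner ℂ (f i.succ) (f i.succ) : ℂ) = 1 := by
            rw [inner_self_eq_norm_sq_to_K (𝕜 := ℂ), hf.1]
            norm_num
          have h2 : (inner ℂ (e i) (e i) : ℂ) = 1 := by
            rw [inner_self_eq_norm_sq_to_K (𝕜 := ℂ), he.1]
            norm_num
          rw [h1, h2, one_smul, one_smul]
        · intro j _ hji
          have : (inner ℂ (e j) (e i) : ℂ) = 0 := he.2 hji
          rw [this, zero_smul]
        · intro h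
          exact absurd (Finset.mem_univ i) h
      rw [Finset.sum_congr rfl fun i _ => hrow i, Finset.sum_const, Finset.card_univ,
        Fintype.card_fin, ← Nat.cast_smul_eq_nsmul ℂ]
    have hPnorm : ‖P‖ = 1 := by
      rw [hP, rk_norm, hf.1]
      norm_num
    have key := hC n n a b e e (fun i => rk_compact _ _) (fun j => rk_compact _ _) he he
    rw [hQa, hQb, hsum] at key
    have hLHS : ‖(n : ℂ) • P‖ = (n : ℝ) := by
      rw [norm_smul, hPnorm, mul_one, Complex.norm_natCast]
    rw [hLHS] at key
    have hQ0 : (0 : ℝ) ≤ ‖Q‖ := norm_nonneg _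
    have hsqrt : Real.sqrt ‖Q‖ * Real.sqrt ‖Q‖ = ‖Q‖ := Real.mul_self_sqrt hQ0
    have key2 : (n : ℝ) ≤ |C| := by
      have h1 : C * Real.sqrt ‖Q‖ * Real.sqrt ‖Q‖ = C * ‖Q‖ := by
        rw [mul_assoc, hsqrt]
      rw [h1] at key
      calc (n : ℝ) ≤ C * ‖Q‖ := key
        _ ≤ |C| * ‖Q‖ := mul_le_mul_of_nonneg_right (le_abs_self C) hQ0
        _ ≤ |C| * 1 := mul_le_mul_of_nonneg_left hQnorm (abs_nonneg C)
        _ = |C| := mul_one _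
    have key3 : |C| < (n : ℝ) := by
      rw [hn]
      push_cast
      exact Nat.lt_floor_add_one |C|
    linarith
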